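/- Let (γ_j)_{j≥1} be a sequence of positive real numbers and Λ a positive integer such that 1, γ_1, ..., γ_Λ are linearly independent over ℚ and for every j > Λ there exist rational numbers c_{j,1}, ..., c_{j,Λ} with γ_j = c_{j,1}·γ_1 + ... + c_{j,Λ}·γ_Λ. Then for every positive integer N there exists a positive integer m such that m·γ_j − ⌊m·γ_j⌋ ≥ 1/4 for all 1 ≤ j ≤ N. -/

import Mathlib

open Finset

noncomputable def ee (θ : ℝ) : ℂ := Complex.exp (θ * (2 * Real.pi * Complex.I))

lemma ee_add (a b : ℝ) : ee (a + b) = ee a * ee b := by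
  rw [ee, ee, ee, ← Complex.exp_add]; push_cast; ring_nf

lemma ee_int (n : ℤ) : ee n = 1 := by
  rw [ee]; exact_mod_cast Complex.exp_int_mul_two_pi_mul_I n

lemma ee_nat_pow (θ : ℝ) (n : ℕ) : ee θ ^ n = ee (n * θ) := by
  rw [ee, ee, ← Complex.exp_nat_mul]; push_cast; ring_nf

lemma abs_ee (θ : ℝ) : ‖ee θ‖ = 1 := by
  rw [ee, Complex.norm_exp]; simp

lemma ee_eq_one_iff {θ : ℝ} : ee θ = 1 ↔ ∃ n : ℤ, θ = n := by
  rw [ee, Complex.exp_eq_one_iff]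
  constructor
  · rintro ⟨n, hn⟩
    refine ⟨n, ?_⟩
    have h2 : (2 * Real.pi * Complex.I : ℂ) ≠ 0 := by
      simp [Real.pi_ne_zero, Complex.I_ne_zero]
    have h3 : (θ : ℂ) = (n : ℂ) := mul_right_cancel₀ h2 hn
    exact_mod_cast h3
  · rintro ⟨n, rfl⟩; exact ⟨n, by push_cast; ring⟩

lemma ee_sum {ι : Type*} (s : Finset ι) (f : ι → ℝ) :
    ee (∑ i ∈ s, f i) = ∏ i ∈ s, ee (f i) := by
  have : ∀ i ∈ s, ee (f i) = Complex.exp ((f i : ℂ) * (2 * Real.pi * Complex.I)) :=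
    fun i _ => rfl
  rw [Finset.prod_congr rfl this, ← Complex.exp_sum, ee]
  congr 1
  push_cast
  rw [Finset.sum_mul]

lemma sq_abs_one_add_ee (θ : ℝ) :
    ‖1 + ee θ‖ ^ 2 = 2 + 2 * Real.cos (2 * Real.pi * θ) := by
  have h : ee θ = Complex.exp ((2 * Real.pi * θ : ℝ) * Complex.I) := by
    rw [ee]; push_cast; ring_nf
  rw [Complex.sq_norm, h, Complex.normSq_apply]
  rw [Complex.add_re, Complex.add_im]
  rw [Complex.exp_ofReal_mul_I_re, Complex.exp_ofReal_mul_I_im]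
  simp only [Complex.one_re, Complex.one_im, zero_add]
  nlinarith [Real.sin_sq_add_cos_sq (2 * Real.pi * θ)]


lemma geom_bound {z : ℂ} (hz : z ≠ 1) (h1 : ‖z‖ = 1) (T : ℕ) :
    ‖∑ m ∈ Finset.range T, z ^ (m + 1)‖ ≤ 2 / ‖z - 1‖ := by
  have hne : 0 < ‖z - 1‖ := by
    simpa [norm_pos_iff, sub_eq_zero] using hz
  have hsum : (∑ m ∈ Finset.range T, z ^ (m + 1)) = z * ((z ^ T - 1) / (z - 1)) := by
    rw [← geom_sum_eq hz, Finset.mul_sum]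
    exact Finset.sum_congr rfl fun m _ => by ring
  rw [hsum, norm_mul, h1, one_mul, norm_div]
  have h2 : ‖z ^ T - 1‖ ≤ 2 := by
    calc ‖z ^ T - 1‖ ≤ ‖z ^ T‖ + ‖(1:ℂ)‖ :=
          by simpa using norm_sub_le (z ^ T) 1
    _ ≤ 2 := by rw [norm_pow, h1]; norm_num
  gcongr

lemma kron (Λ : ℕ) (x β : Fin Λ → ℝ)
    (hind : ∀ (k : Fin Λ → ℤ) (n : ℤ), ∑ i, (k i : ℝ) * x i = (n : ℝ) → ∀ i, k i = 0)
    {η : ℝ} (hη : 0 < η) :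
    ∃ m : ℕ, 0 < m ∧ ∀ i, |(m : ℝ) * x i - β i - round ((m : ℝ) * x i - β i)| < η := by
  classical
  by_contra hcon
  push_neg at hcon
  -- trivial case Λ = 0
  rcases Nat.eq_zero_or_pos Λ with hΛ0 | hΛpos
  · obtain ⟨i, -⟩ := hcon 1 one_pos
    subst hΛ0; exact i.elim0
  set δ : ℝ := min η (1/2) with hδdef
  have hδ0 : 0 < δ := lt_min hη (by norm_num)
  have hδhalf : δ ≤ 1/2 := min_le_right _ _
  have hπ := Real.pi_pos
  set A : ℝ := 2 + 2 * Real.cos (2 * Real.pi * δ) with hA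
  have hA0 : 0 ≤ A := by nlinarith [Real.neg_one_le_cos (2*Real.pi*δ)]
  have hA4 : A < 4 := by
    have h1 : Real.cos (2*Real.pi*δ) < Real.cos 0 :=
      Real.cos_lt_cos_of_nonneg_of_le_pi le_rfl (by nlinarith) (by nlinarith)
    rw [Real.cos_zero] at h1; nlinarith
  -- the basic function
  set φ : ℕ → ℂ := fun n => ∏ i, (1 + ee ((n : ℝ) * x i - β i)) with hφdef
  -- bound on each |φ n|², for n ≥ 1
  have hfactor4 : ∀ θ : ℝ, ‖1 + ee θ‖ ^ 2 ≤ 4 := by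
    intro θ
    rw [sq_abs_one_add_ee]
    nlinarith [Real.cos_le_one (2 * Real.pi * θ)]
  have hφsq : ∀ n : ℕ, 0 < n → ‖φ n‖ ^ 2 ≤ A * 4 ^ (Λ - 1) := by
    intro n hn
    obtain ⟨i₀, hi₀⟩ := hcon n hn
    have habs : ‖φ n‖ ^ 2 = ∏ i, ‖1 + ee ((n:ℝ) * x i - β i)‖ ^ 2 := by
      rw [hφdef, norm_prod, ← Finset.prod_pow]
    rw [habs, ← Finset.mul_prod_erase univ _ (mem_univ i₀)]
    have hbad : ‖1 + ee ((n:ℝ) * x i₀ - β i₀)‖ ^ 2 ≤ A := by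
      rw [sq_abs_one_add_ee]
      have key : Real.cos (2 * Real.pi * ((n:ℝ) * x i₀ - β i₀)) ≤ Real.cos (2 * Real.pi * δ) := by
        set θ := (n:ℝ) * x i₀ - β i₀
        have hu : |θ - round θ| ≤ 1/2 := abs_sub_round θ
        have hδu : δ ≤ |θ - round θ| := le_trans (min_le_left _ _) hi₀
        have habs2 : Real.cos (2 * Real.pi * θ) = Real.cos (2 * Real.pi * |θ - round θ|) := by
          have h1 : Real.cos (2 * Real.pi * θ)
              = Real.cos (2 * Real.pi * (θ - round θ) + (round θ) * (2 * Real.pi)) := by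
            congr 1; ring
          rw [h1, Real.cos_add_int_mul_two_pi, ← Real.cos_abs, abs_mul,
            abs_of_pos (by positivity : (0:ℝ) < 2 * Real.pi)]
        rw [habs2]
        apply Real.cos_le_cos_of_nonneg_of_le_pi (by positivity)
        · nlinarith
        · nlinarith
      linarith
    have h4 : ∏ i ∈ univ.erase i₀, ‖1 + ee ((n:ℝ) * x i - β i)‖ ^ 2
        ≤ ∏ _i ∈ univ.erase i₀, (4:ℝ) :=
      Finset.prod_le_prod (fun i _ => by positivity) (fun i _ => hfactor4 _)
    rw [Finset.prod_const, Finset.card_erase_of_mem (mem_univ i₀), Finset.card_univ,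
      Fintype.card_fin] at h4
    have h5 : (0:ℝ) ≤ ∏ i ∈ univ.erase i₀, ‖1 + ee ((n:ℝ) * x i - β i)‖ ^ 2 :=
      Finset.prod_nonneg (fun i _ => by positivity)
    exact mul_le_mul hbad h4 h5 hA0
  -- choose s
  set q : ℝ := A / 4 with hqdef
  have hq0 : 0 ≤ q := by positivity
  have hq1 : q < 1 := by rw [hqdef]; linarith
  obtain ⟨s, hs1, hskey⟩ : ∃ s : ℕ, 1 ≤ s ∧ ((2*s+1 : ℝ))^Λ * q^s < 1/2 := by
    have hsum : Summable (fun n : ℕ => ((n:ℝ))^Λ * q^n) := by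
      have h := summable_norm_pow_mul_geometric_of_norm_lt_one (R := ℝ) Λ
        (r := q) (by rwa [Real.norm_eq_abs, abs_of_nonneg hq0])
      exact h.of_norm
    have htend := hsum.tendsto_atTop_zero
    have h3 : Filter.Tendsto (fun n : ℕ => (3:ℝ)^Λ * (((n:ℝ))^Λ * q^n))
        Filter.atTop (nhds 0) := by
      simpa using htend.const_mul ((3:ℝ)^Λ)
    have hev := h3.eventually (gt_mem_nhds (by norm_num : (0:ℝ) < 1/2))
    obtain ⟨s, hs2, hs1⟩ := (hev.and (Filter.eventually_ge_atTop 1)).exists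
    refine ⟨s, hs1, lt_of_le_of_lt ?_ hs2⟩
    have h31 : ((2*s+1:ℝ)) ≤ 3 * s := by
      have : (1:ℝ) ≤ s := by exact_mod_cast hs1
      linarith
    calc (2*s+1:ℝ)^Λ * q^s ≤ ((3:ℝ)*s)^Λ * q^s := by
          apply mul_le_mul_of_nonneg_right _ (by positivity)
          exact pow_le_pow_left₀ (by positivity) h31 Λ
    _ = (3:ℝ)^Λ * (((s:ℝ))^Λ * q^s) := by rw [mul_pow]; ring
  set p : ℕ := 2 * s with hpdef
  set K := Fintype.piFinset (fun _ : Fin Λ => Finset.range (p+1)) with hKdef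
  set c : (Fin Λ → ℕ) → ℝ := fun k => ∏ i, (p.choose (k i) : ℝ) with hcdef
  set ω : (Fin Λ → ℕ) → ℝ := fun k => ∑ i, (k i : ℝ) * x i with hωdef
  set ψ : (Fin Λ → ℕ) → ℂ := fun k => ee (- ∑ i, (k i : ℝ) * β i) with hψdef
  set k₀ : Fin Λ → ℕ := fun _ => s with hk₀def
  have hk₀K : k₀ ∈ K := by
    rw [hKdef, Fintype.mem_piFinset]
    intro i
    rw [Finset.mem_range]
    have h1 : k₀ i = s := rfl
    have h2 : p = 2 * s := hpdef
    omega
  -- expansion of φ n ^ p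
  have hexp : ∀ n : ℕ, φ n ^ p = ∑ k ∈ K, (c k : ℂ) * ψ k * ee (ω k) ^ n := by
    intro n
    rw [hφdef]
    simp only
    rw [← Finset.prod_pow]
    have h1 : ∀ i : Fin Λ, (1 + ee ((n:ℝ) * x i - β i)) ^ p
        = ∑ j ∈ Finset.range (p+1), ee ((n:ℝ) * x i - β i) ^ j * (p.choose j : ℂ) := by
      intro i
      rw [add_comm (1:ℂ), add_pow]
      exact Finset.sum_congr rfl fun j _ => by rw [one_pow, mul_one]
    rw [Finset.prod_congr rfl (fun i _ => h1 i), Finset.prod_univ_sum]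
    apply Finset.sum_congr rfl
    intro k hk
    rw [Finset.prod_mul_distrib]
    have h2 : ∀ i : Fin Λ, ee ((n:ℝ) * x i - β i) ^ (k i)
        = ee ((k i : ℝ) * ((n:ℝ) * x i - β i)) := fun i => ee_nat_pow _ _
    rw [Finset.prod_congr rfl (fun i _ => h2 i), ← ee_sum]
    have h3 : ∑ i, (k i : ℝ) * ((n:ℝ) * x i - β i)
        = (n : ℝ) * ω k + (- ∑ i, (k i : ℝ) * β i) := by
      rw [hωdef]
      simp only
      rw [Finset.mul_sum, ← Finset.sum_neg_distrib, ← Finset.sum_add_distrib]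
      exact Finset.sum_congr rfl fun i _ => by ring
    rw [h3, ee_add, ← ee_nat_pow, hcdef, hψdef]
    simp only
    rw [Complex.ofReal_prod]
    push_cast
    ring
  -- distinct frequencies
  have hne1 : ∀ k, k ∈ K → k ≠ k₀ → ee (ω k - ω k₀) ≠ 1 := by
    intro k hk hkne h1
    obtain ⟨n, hn⟩ := ee_eq_one_iff.mp h1
    have hrel : ∑ i, ((((k i : ℤ) - (s : ℤ)) : ℤ) : ℝ) * x i = (n : ℝ) := by
      rw [← hn, hωdef]
      simp only
      rw [hk₀def]
      simp only
      rw [← Finset.sum_sub_distrib]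
      push_cast
      exact Finset.sum_congr rfl fun i _ => by ring
    have hz := hind _ n hrel
    apply hkne
    funext i
    have h2 := hz i
    have : k i = s := by omega
    rw [this, hk₀def]
  have hc0 : ∀ k, 0 ≤ c k := fun k => Finset.prod_nonneg fun i _ => by positivity
  have hck₀pos : 0 < c k₀ := Finset.prod_pos fun i _ => by
    have := Nat.choose_pos (show s ≤ p by omega)
    rw [hk₀def]
    exact_mod_cast this
  set E : ℝ := ∑ k ∈ K.erase k₀, c k * (2 / ‖ee (ω k - ω k₀) - 1‖) with hEdef
  have hE0 : 0 ≤ E :=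
    Finset.sum_nonneg fun k hk => mul_nonneg (hc0 k) (div_nonneg (by norm_num) (by positivity))
  set T : ℕ := ⌈2 * E / c k₀⌉₊ + 1 with hTdef
  have hT0 : 0 < T := Nat.succ_pos _
  have hTE : 2 * E < T * c k₀ := by
    have h1 : 2 * E / c k₀ < (T:ℝ) := by
      refine lt_of_le_of_lt (Nat.le_ceil _) ?_
      exact_mod_cast Nat.lt_succ_self _
    calc 2*E = (2*E/c k₀) * c k₀ := by field_simp
    _ < T * c k₀ := mul_lt_mul_of_pos_right h1 hck₀pos
  set S : ℂ := ∑ m ∈ Finset.range T, φ (m+1) ^ p * ee (-(ω k₀)) ^ (m+1) with hSdef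
  have hSswap : S = ∑ k ∈ K, (c k : ℂ) * ψ k
      * ∑ m ∈ Finset.range T, ee (ω k - ω k₀) ^ (m+1) := by
    rw [hSdef]
    have h1 : ∀ m : ℕ, φ (m+1) ^ p * ee (-(ω k₀)) ^ (m+1)
        = ∑ k ∈ K, (c k : ℂ) * ψ k * ee (ω k - ω k₀) ^ (m+1) := by
      intro m
      rw [hexp (m+1), Finset.sum_mul]
      apply Finset.sum_congr rfl
      intro k hk
      rw [mul_assoc, mul_assoc, ← mul_pow, ← ee_add, sub_eq_add_neg]
      ring
    rw [Finset.sum_congr rfl (fun m _ => h1 m), Finset.sum_comm]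
    exact Finset.sum_congr rfl fun k _ => by rw [Finset.mul_sum]
  have hee0 : ee (0:ℝ) = 1 := by simpa using ee_int 0
  have hsplit : S = (c k₀ : ℂ) * ψ k₀ * T
      + ∑ k ∈ K.erase k₀, (c k : ℂ) * ψ k
        * ∑ m ∈ Finset.range T, ee (ω k - ω k₀) ^ (m+1) := by
    rw [hSswap, ← Finset.add_sum_erase _ _ hk₀K]
    congr 1
    rw [sub_self, hee0]
    simp
  -- upper bound for |S|
  have habsS : ‖S‖ ≤ T * ((4:ℝ)^Λ * q)^s := by
    have hA4q : A * 4 ^ (Λ - 1) = (4:ℝ)^Λ * q := by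
      have h4 : (4:ℝ)^Λ = 4^(Λ-1) * 4 := by
        rw [← pow_succ]
        congr 1
        omega
      rw [h4, hqdef]
      field_simp
    calc ‖S‖
        ≤ ∑ m ∈ Finset.range T, ‖φ (m+1) ^ p * ee (-(ω k₀)) ^ (m+1)‖ := by
          rw [hSdef]; exact norm_sum_le _ _
    _ ≤ ∑ _m ∈ Finset.range T, ((4:ℝ)^Λ * q)^s := by
          apply Finset.sum_le_sum
          intro m hm
          rw [norm_mul, norm_pow, norm_pow, abs_ee, one_pow, mul_one]
          rw [hpdef, pow_mul]
          rw [← hA4q]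
          exact pow_le_pow_left₀ (by positivity) (hφsq (m+1) (Nat.succ_pos m)) s
    _ = T * ((4:ℝ)^Λ * q)^s := by rw [Finset.sum_const, Finset.card_range, nsmul_eq_mul]
  -- lower bound for |S|
  have hlow : (T : ℝ) * c k₀ ≤ ‖S‖ + E := by
    have h1 : (c k₀ : ℂ) * ψ k₀ * T = S - ∑ k ∈ K.erase k₀, (c k : ℂ) * ψ k
        * ∑ m ∈ Finset.range T, ee (ω k - ω k₀) ^ (m+1) := by
      rw [hsplit]; ring
    have h2 : ‖(c k₀:ℂ) * ψ k₀ * (T:ℂ)‖ = c k₀ * T := by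
      rw [norm_mul, norm_mul, Complex.norm_real, Real.norm_eq_abs, abs_of_nonneg (hc0 k₀), hψdef]
      simp only
      rw [abs_ee, Complex.norm_natCast, mul_one]
    have h3 : ‖∑ k ∈ K.erase k₀, (c k : ℂ) * ψ k
        * ∑ m ∈ Finset.range T, ee (ω k - ω k₀) ^ (m+1)‖ ≤ E := by
      refine le_trans (norm_sum_le _ _) ?_
      rw [hEdef]
      apply Finset.sum_le_sum
      intro k hk
      rw [norm_mul, norm_mul, Complex.norm_real, Real.norm_eq_abs, abs_of_nonneg (hc0 k), hψdef]
      simp only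
      rw [abs_ee, mul_one]
      apply mul_le_mul_of_nonneg_left _ (hc0 k)
      exact geom_bound (hne1 k (Finset.mem_of_mem_erase hk) (Finset.ne_of_mem_erase hk))
        (abs_ee _) T
    calc (T:ℝ) * c k₀ = ‖(c k₀:ℂ) * ψ k₀ * (T:ℂ)‖ := by rw [h2]; ring
    _ ≤ ‖S‖ + ‖∑ k ∈ K.erase k₀, (c k : ℂ) * ψ k
        * ∑ m ∈ Finset.range T, ee (ω k - ω k₀) ^ (m+1)‖ := by
          rw [h1]
          exact (norm_sub_le _ _)
    _ ≤ ‖S‖ + E := by linarith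
  -- binomial bound
  have hchoose : (4:ℝ)^s ≤ (2*s+1) * (p.choose s) := by
    have h1 : (2:ℕ)^(2*s) = ∑ j ∈ Finset.range (2*s+1), (2*s).choose j :=
      (Nat.sum_range_choose (2*s)).symm
    have h2 : ∑ j ∈ Finset.range (2*s+1), (2*s).choose j ≤ (2*s+1) * (2*s).choose s := by
      calc ∑ j ∈ Finset.range (2*s+1), (2*s).choose j
          ≤ ∑ _j ∈ Finset.range (2*s+1), (2*s).choose s := by
            apply Finset.sum_le_sum
            intro j _
            have := Nat.choose_le_middle j (2*s)
            simpa [Nat.mul_div_cancel_left] using this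
      _ = (2*s+1) * (2*s).choose s := by
            rw [Finset.sum_const, Finset.card_range, smul_eq_mul]
    have h3 : (2:ℕ)^(2*s) ≤ (2*s+1) * (2*s).choose s := h1 ▸ h2
    have h4 : ((2:ℝ))^(2*s) ≤ ((2*s+1 : ℕ):ℝ) * (((2*s).choose s : ℕ):ℝ) := by
      exact_mod_cast h3
    calc (4:ℝ)^s = (2:ℝ)^(2*s) := by
          rw [show (4:ℝ) = 2^2 by norm_num, ← pow_mul]
    _ ≤ (2*s+1) * (p.choose s) := by push_cast at h4 ⊢; exact h4
  have hck₀ : c k₀ = ((p.choose s : ℝ))^Λ := by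
    rw [hcdef, hk₀def]
    simp [Finset.prod_const, Finset.card_univ]
  have hchpos : (0:ℝ) < (p.choose s : ℝ) := by
    exact_mod_cast Nat.choose_pos (show s ≤ p by omega)
  have hfin1 : (T:ℝ) * ((4:ℝ)^Λ * q)^s < T * c k₀ / 2 := by
    have h2 : ((4:ℝ)^Λ * q)^s = ((4:ℝ)^s)^Λ * q^s := by
      rw [mul_pow, ← pow_mul, ← pow_mul, mul_comm Λ s]
    have h3 : ((4:ℝ)^s)^Λ ≤ ((2*s+1:ℝ) * (p.choose s))^Λ :=
      pow_le_pow_left₀ (by positivity) hchoose Λ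
    have h5 : ((4:ℝ)^Λ * q)^s ≤ ((2*s+1:ℝ))^Λ * q^s * ((p.choose s:ℝ))^Λ := by
      rw [h2]
      calc ((4:ℝ)^s)^Λ * q^s ≤ ((2*s+1:ℝ) * ((p.choose s:ℝ)))^Λ * q^s :=
            mul_le_mul_of_nonneg_right h3 (by positivity)
      _ = ((2*s+1:ℝ))^Λ * q^s * ((p.choose s:ℝ))^Λ := by rw [mul_pow]; ring
    have h6 : ((2*s+1:ℝ))^Λ * q^s * ((p.choose s:ℝ))^Λ < (1/2) * ((p.choose s:ℝ))^Λ := by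
      apply mul_lt_mul_of_pos_right _ (by positivity)
      exact hskey
    have h7 : ((4:ℝ)^Λ * q)^s < (1/2) * c k₀ := by
      rw [hck₀]
      exact lt_of_le_of_lt h5 h6
    have hTpos : (0:ℝ) < T := by exact_mod_cast hT0
    calc (T:ℝ) * ((4:ℝ)^Λ * q)^s < T * ((1/2) * c k₀) := by
          exact mul_lt_mul_of_pos_left h7 hTpos
    _ = T * c k₀ / 2 := by ring
  linarith

/-- Corollary to Kronecker's diophantine approximation (5.2.2.4). -/
theorem stmt_1 (γ : ℕ → ℝ) (hpos : ∀ j, 1 ≤ j → 0 < γ j) (Λ : ℕ) (hΛ : 0 < Λ)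
    (hli : LinearIndependent ℚ (fun i : Fin (Λ + 1) => if (i : ℕ) = 0 then (1 : ℝ) else γ i))
    (hdep : ∀ j, Λ < j → ∃ c : Fin Λ → ℚ, γ j = ∑ i, (c i : ℝ) * γ ((i : ℕ) + 1)) :
    ∀ N : ℕ, 0 < N → ∃ m : ℕ, 0 < m ∧ ∀ j, 1 ≤ j → j ≤ N →
      (1 : ℝ) / 4 ≤ (m : ℝ) * γ j - ⌊(m : ℝ) * γ j⌋ := by
  intro N hN
  classical
  -- uniform rational coefficients for all 1 ≤ j ≤ N
  have key : ∀ j, 1 ≤ j → j ≤ N → ∃ c : Fin Λ → ℚ, γ j = ∑ i, (c i : ℝ) * γ ((i : ℕ) + 1) := by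
    intro j h1 h2
    rcases le_or_gt j Λ with hj | hj
    · have hjΛ : j - 1 < Λ := by omega
      refine ⟨fun i => if i = (⟨j - 1, hjΛ⟩ : Fin Λ) then 1 else 0, ?_⟩
      have hrw : ∀ i : Fin Λ,
          ((if i = (⟨j - 1, hjΛ⟩ : Fin Λ) then (1:ℚ) else 0 : ℚ) : ℝ) * γ ((i : ℕ) + 1)
          = if i = (⟨j - 1, hjΛ⟩ : Fin Λ) then γ ((i : ℕ) + 1) else 0 := by
        intro i; split <;> simp
      rw [Finset.sum_congr rfl (fun i _ => hrw i), Finset.sum_ite_eq' univ _ _]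
      simp only [mem_univ, if_true]
      congr 1
      omega
    · exact hdep j hj
  choose! cc hcc using key
  -- common denominator
  set Q : ℕ := ∏ j ∈ Finset.Icc 1 N, ∏ i : Fin Λ, (cc j i).den with hQdef
  have hQ0 : 0 < Q := Finset.prod_pos fun j _ => Finset.prod_pos fun i _ => (cc j i).pos
  have hQR : (0:ℝ) < Q := by exact_mod_cast hQ0
  have hint : ∀ j ∈ Finset.Icc 1 N, ∀ i : Fin Λ, ∃ d : ℤ, ((cc j i : ℚ) * Q : ℚ) = d := by
    intro j hj i
    have hdvd : (cc j i).den ∣ Q := by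
      refine dvd_trans (Finset.dvd_prod_of_mem (fun i => (cc j i).den) (mem_univ i)) ?_
      exact Finset.dvd_prod_of_mem (fun j => ∏ i : Fin Λ, (cc j i).den) hj
    obtain ⟨t, ht⟩ := hdvd
    refine ⟨(cc j i).num * t, ?_⟩
    rw [ht]
    push_cast
    rw [← mul_assoc, Rat.mul_den_eq_num]
  -- sizes
  have h1N : (1:ℕ) ∈ Finset.Icc 1 N := Finset.mem_Icc.mpr ⟨le_rfl, hN⟩
  have hne : (Finset.Icc 1 N).Nonempty := ⟨1, h1N⟩
  set Γ : ℝ := (Finset.Icc 1 N).sup' hne γ with hΓdef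
  have hΓpos : 0 < Γ := lt_of_lt_of_le (hpos 1 le_rfl) (Finset.le_sup' γ h1N)
  set ε : ℝ := 1 / (8 * Γ) with hεdef
  have hε0 : 0 < ε := by positivity
  have hεγ : ∀ j ∈ Finset.Icc 1 N, ε * γ j ≤ 1/8 := by
    intro j hj
    have h1 : γ j ≤ Γ := Finset.le_sup' γ hj
    rw [hεdef]
    rw [div_mul_eq_mul_div, mul_comm]
    rw [div_le_div_iff₀ (by positivity) (by norm_num)]
    nlinarith
  set Sb : ℕ → ℝ := fun j => ∑ i : Fin Λ, |(cc j i : ℝ)| with hSbdef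
  have hSb0 : ∀ j, 0 ≤ Sb j := fun j => Finset.sum_nonneg fun i _ => abs_nonneg _
  set η : ℝ := (Finset.Icc 1 N).inf' hne (fun j => ε * γ j / (2 * Q * (Sb j + 1))) with hηdef
  have hη0 : 0 < η := by
    rw [hηdef, Finset.lt_inf'_iff]
    intro j hj
    have := hpos j (Finset.mem_Icc.mp hj).1
    have := hSb0 j
    positivity
  -- apply Kronecker
  set x : Fin Λ → ℝ := fun i => γ ((i:ℕ)+1) / Q with hxdef
  set β : Fin Λ → ℝ := fun i => -(ε * γ ((i:ℕ)+1)) / Q with hβdef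
  have hind : ∀ (k : Fin Λ → ℤ) (n : ℤ), ∑ i, (k i : ℝ) * x i = (n : ℝ) → ∀ i, k i = 0 := by
    intro k n hrel
    have hrel2 : ∑ i, (k i : ℝ) * γ ((i:ℕ)+1) = (n : ℝ) * Q := by
      have := congrArg (fun t : ℝ => t * Q) hrel
      rw [Finset.sum_mul] at this
      calc ∑ i, (k i : ℝ) * γ ((i:ℕ)+1) = ∑ i, (k i : ℝ) * x i * Q := by
            apply Finset.sum_congr rfl
            intro i _
            rw [hxdef]
            field_simp
      _ = (n:ℝ) * Q := this
    set g : Fin (Λ+1) → ℚ := Fin.cases (-(n*Q)) (fun i => (k i : ℚ)) with hgdef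
    have hg : ∀ j, g j = 0 := by
      apply Fintype.linearIndependent_iff.mp hli g
      rw [Fin.sum_univ_succ]
      have h0 : g 0 = -(n*Q) := rfl
      have hsucc : ∀ i : Fin Λ, g i.succ = (k i : ℚ) := fun i => rfl
      rw [h0]
      have hv0 : (if ((0 : Fin (Λ+1)) : ℕ) = 0 then (1:ℝ) else γ ((0 : Fin (Λ+1)) : ℕ)) = 1 := by
        simp
      rw [hv0]
      have hvs : ∀ i : Fin Λ,
          g i.succ • (if ((i.succ : Fin (Λ+1)) : ℕ) = 0 then (1:ℝ) else γ ((i.succ : Fin (Λ+1)) : ℕ))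
          = (k i : ℝ) * γ ((i:ℕ)+1) := by
        intro i
        rw [hsucc i]
        have : ((i.succ : Fin (Λ+1)) : ℕ) = (i:ℕ)+1 := by simp [Fin.val_succ]
        rw [if_neg (by omega), this, Rat.smul_def]
        norm_cast
      rw [Finset.sum_congr rfl (fun i _ => hvs i), hrel2, Rat.smul_def]
      push_cast
      ring
    intro i
    have := hg i.succ
    have h2 : (k i : ℚ) = 0 := this
    exact_mod_cast h2
  obtain ⟨m, hm0, hmθ⟩ := kron Λ x β hind hη0
  refine ⟨m, hm0, ?_⟩
  intro j hj1 hjN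
  have hjIcc : j ∈ Finset.Icc 1 N := Finset.mem_Icc.mpr ⟨hj1, hjN⟩
  have hγj : 0 < γ j := hpos j hj1
  -- decompose m * γ (i+1)
  set kk : Fin Λ → ℤ := fun i => round ((m:ℝ) * x i - β i) with hkkdef
  set θ : Fin Λ → ℝ := fun i => (m:ℝ) * x i - β i - kk i with hθdef
  have hθ : ∀ i, |θ i| < η := fun i => hmθ i
  have hmx : ∀ i : Fin Λ, (m:ℝ) * γ ((i:ℕ)+1) = -(ε * γ ((i:ℕ)+1)) + Q * kk i + Q * θ i := by
    intro i
    have h1 : (m:ℝ) * x i = β i + kk i + θ i := by rw [hθdef]; ring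
    have h2 : (m:ℝ) * γ ((i:ℕ)+1) = ((m:ℝ) * x i) * Q := by
      rw [hxdef]; field_simp
    rw [h2, h1, hβdef]
    field_simp
  -- the integer part
  choose d hd using hint j hjIcc
  have hdR : ∀ i : Fin Λ, (cc j i : ℝ) * Q = (d i : ℝ) := by
    intro i
    have h2 : ((cc j i : ℚ) * (Q:ℚ) : ℚ) = ((d i : ℤ) : ℚ) := hd i
    have h3 := congrArg (fun t : ℚ => (t : ℝ)) h2
    push_cast at h3
    exact h3
  set KK : ℤ := ∑ i, d i * kk i with hKKdef
  set e : ℝ := ∑ i, (cc j i : ℝ) * (Q * θ i) with hedef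
  have hmain : (m:ℝ) * γ j = (KK : ℝ) + (-(ε * γ j) + e) := by
    have h1 : (m:ℝ) * γ j = ∑ i, (cc j i : ℝ) * ((m:ℝ) * γ ((i:ℕ)+1)) := by
      rw [hcc j hj1 hjN, Finset.mul_sum]
      exact Finset.sum_congr rfl fun i _ => by ring
    rw [h1]
    have h2 : ∀ i : Fin Λ, (cc j i : ℝ) * ((m:ℝ) * γ ((i:ℕ)+1))
        = (d i : ℝ) * (kk i : ℝ) + ((cc j i : ℝ) * (-(ε * γ ((i:ℕ)+1))) + (cc j i : ℝ) * (Q * θ i)) := by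
      intro i
      rw [hmx i, mul_add, mul_add, ← hdR i]
      ring
    rw [Finset.sum_congr rfl (fun i _ => h2 i), Finset.sum_add_distrib, Finset.sum_add_distrib]
    have h3 : ∑ i, (cc j i : ℝ) * (-(ε * γ ((i:ℕ)+1))) = -(ε * γ j) := by
      rw [hcc j hj1 hjN, Finset.mul_sum, ← Finset.sum_neg_distrib]
      exact Finset.sum_congr rfl fun i _ => by ring
    rw [h3, hKKdef, hedef]
    push_cast
    ring
  -- error bound
  have hQη : Q * η ≤ Q * (ε * γ j / (2 * Q * (Sb j + 1))) := by
    apply mul_le_mul_of_nonneg_left _ (le_of_lt hQR)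
    exact Finset.inf'_le _ hjIcc
  have he : |e| ≤ ε * γ j / 2 := by
    have h1 : |e| ≤ ∑ i, |(cc j i : ℝ)| * (Q * η) := by
      refine le_trans (Finset.abs_sum_le_sum_abs _ _) ?_
      apply Finset.sum_le_sum
      intro i _
      rw [abs_mul, abs_mul]
      have := (hθ i).le
      have habsQ : |(Q:ℝ)| = Q := abs_of_pos hQR
      rw [habsQ]
      apply mul_le_mul_of_nonneg_left _ (abs_nonneg _)
      exact mul_le_mul_of_nonneg_left this (le_of_lt hQR)
    have h2 : ∑ i, |(cc j i : ℝ)| * (Q * η) = Sb j * (Q * η) := by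
      rw [hSbdef, ← Finset.sum_mul]
    have h3 : Sb j * (Q * η) ≤ Sb j * (ε * γ j / (2 * (Sb j + 1))) := by
      apply mul_le_mul_of_nonneg_left _ (hSb0 j)
      calc Q * η ≤ Q * (ε * γ j / (2 * Q * (Sb j + 1))) := hQη
      _ = ε * γ j / (2 * (Sb j + 1)) := by
          have hq := hQR.ne'
          have hs : Sb j + 1 ≠ 0 := by have := hSb0 j; linarith
          field_simp
    have h4 : Sb j * (ε * γ j / (2 * (Sb j + 1))) ≤ ε * γ j / 2 := by
      have hεγj : 0 < ε * γ j := by positivity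
      have hs := hSb0 j
      rw [mul_comm, div_mul_eq_mul_div, div_le_div_iff₀ (by positivity) (by norm_num)]
      nlinarith
    linarith
  -- conclude
  have hr1 : -(ε * γ j) + e < 0 := by
    have : 0 < ε * γ j := by positivity
    have := abs_le.mp he
    linarith
  have hr2 : -(1:ℝ) ≤ -(ε * γ j) + e := by
    have h5 := hεγ j hjIcc
    have := abs_le.mp he
    linarith
  have hfloor : ⌊(m:ℝ) * γ j⌋ = KK - 1 := by
    rw [hmain]
    rw [Int.floor_eq_iff]
    constructor
    · push_cast; linarith
    · push_cast; linarith
  rw [hfloor, hmain]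
  push_cast
  have h5 := hεγ j hjIcc
  have := abs_le.mp he
  linarith
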